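/- Let A be an additive commutative group, l a finite type, S an integer matrix indexed by (l ⊕ l) × (l ⊕ l), and let P and Q be unimodular integer matrices (their determinants are units in ℤ) with Pᵀ * S * P = J and Qᵀ * S * Q = J. Then for every vector V : l ⊕ l → A, the wedge invariant of the vector i ↦ ∑_k (P⁻¹ i k) • V k equals the wedge invariant of the vector i ↦ ∑_k (Q⁻¹ i k) • V k. (Hence the S-equivalence class of the colouring s(K,ρ) of Equation (40), defined as the wedge invariant of P⁻¹V where P is any unimodular matrix bringing M − Mᵀ to standard symplectic form, is independent of the choice of P.) -/

import Mathlib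

open Matrix

/-- The wedge `v ∧ w` of two elements of an additive commutative group `A` (regarded as a
`ℤ`-module), as an element of the second exterior power `⋀²_ℤ A`. -/
noncomputable def wedge {A : Type*} [AddCommGroup A] (v w : A) : ⋀[ℤ]^2 A :=
  ⟨ExteriorAlgebra.ιMulti ℤ 2 ![v, w],
    ExteriorAlgebra.ιMulti_range ℤ 2 (Set.mem_range_self ![v, w])⟩

lemma wedge_coe {A : Type*} [AddCommGroup A] (v w : A) :
    (wedge v w : ExteriorAlgebra ℤ A) = ExteriorAlgebra.ι ℤ v * ExteriorAlgebra.ι ℤ w := by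
  simp [wedge, ExteriorAlgebra.ιMulti_apply, List.ofFn_succ]

lemma entry_eq {l : Type*} [Fintype l] [DecidableEq l] (M : Matrix (l ⊕ l) (l ⊕ l) ℤ)
    (k k' : l ⊕ l) :
    (Mᵀ * Matrix.J l ℤ * M) k k' =
      (∑ j, M (Sum.inl j) k' * M (Sum.inr j) k) - ∑ j, M (Sum.inl j) k * M (Sum.inr j) k' := by
  simp only [Matrix.mul_apply, Matrix.J, Fintype.sum_sum_type, Matrix.fromBlocks,
    Matrix.transpose_apply, Matrix.of_apply, Sum.elim_inl, Sum.elim_inr, Matrix.zero_apply,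
    Matrix.neg_apply, Matrix.one_apply, mul_ite, ite_mul, mul_one, mul_zero, zero_mul, one_mul,
    mul_neg, neg_mul, Finset.sum_ite_eq, Finset.sum_ite_eq', Finset.mem_univ, if_true,
    Finset.sum_neg_distrib, Finset.sum_add_distrib, zero_add, add_zero, Finset.sum_const_zero]
  rw [sub_eq_add_neg]
  congr 1
  exact Finset.sum_congr rfl fun j _ => mul_comm _ _

lemma ring_expand {R : Type*} [Ring R] {l : Type*} [Fintype l]
    (M : Matrix (l ⊕ l) (l ⊕ l) ℤ) (e : l ⊕ l → R) :
    ∑ j : l, (∑ k, M (Sum.inl j) k • e k) * (∑ k', M (Sum.inr j) k' • e k')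
      = ∑ k, ∑ k', (∑ j : l, M (Sum.inl j) k * M (Sum.inr j) k') • (e k * e k') := by
  have h1 : ∀ j : l, (∑ k, M (Sum.inl j) k • e k) * (∑ k', M (Sum.inr j) k' • e k')
      = ∑ k, ∑ k', (M (Sum.inl j) k * M (Sum.inr j) k') • (e k * e k') := by
    intro j
    rw [Finset.sum_mul_sum]
    exact Finset.sum_congr rfl fun k _ => Finset.sum_congr rfl fun k' _ => by
      rw [smul_mul_assoc, mul_smul_comm, smul_smul]
  simp only [h1]
  rw [Finset.sum_comm]
  refine Finset.sum_congr rfl fun k _ => ?_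
  rw [Finset.sum_comm]
  exact Finset.sum_congr rfl fun k' _ => (Finset.sum_smul).symm

lemma symp_conj_inv {l : Type*} [Fintype l] [DecidableEq l]
    (S M : Matrix (l ⊕ l) (l ⊕ l) ℤ) (hM : IsUnit M.det)
    (hMS : Mᵀ * S * M = Matrix.J l ℤ) :
    (M⁻¹)ᵀ * Matrix.J l ℤ * M⁻¹ = S := by
  have hMd : IsUnit (Mᵀ).det := by rwa [Matrix.det_transpose]
  rw [← hMS, Matrix.transpose_nonsing_inv, Matrix.mul_assoc Mᵀ S M,
    Matrix.nonsing_inv_mul_cancel_left _ _ hMd, Matrix.mul_nonsing_inv_cancel_right _ _ hM]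

lemma antisym_sum_zero {R : Type*} [Ring R] {ι : Type*} [Fintype ι] [DecidableEq ι]
    (D : ι → ι → ℤ) (w : ι → ι → R)
    (hD : ∀ k k', D k k' = D k' k) (hw : ∀ k k', w k k' + w k' k = 0)
    (hw0 : ∀ k, w k k = 0) :
    ∑ k, ∑ k', D k k' • w k k' = 0 := by
  rw [← Finset.sum_product']
  apply Finset.sum_involution (fun p _ => p.swap)
  · intro p _
    simp only [Prod.fst_swap, Prod.snd_swap]
    rw [hD p.2 p.1, ← smul_add, hw p.1 p.2, smul_zero]
  · intro p _ hfp heq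
    exfalso
    apply hfp
    have h12 : p.2 = p.1 := congrArg Prod.fst heq
    obtain ⟨a, b⟩ := p
    simp only at h12
    subst h12
    simp [hw0]
  · intro p _; exact Prod.swap_swap p
  · intro p _; exact Finset.mem_univ _

/-- The `S`-equivalence class of the colouring is well defined: the wedge invariant of `P⁻¹V`
does not depend on the choice of unimodular matrix `P` bringing `S` to the standard symplectic
form `J`. -/
theorem wedge_invariant_well_defined {A : Type*} [AddCommGroup A]
    {l : Type*} [Fintype l] [DecidableEq l]
    (S P Q : Matrix (l ⊕ l) (l ⊕ l) ℤ)
    (hP : IsUnit P.det) (hQ : IsUnit Q.det)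
    (hPS : Pᵀ * S * P = Matrix.J l ℤ) (hQS : Qᵀ * S * Q = Matrix.J l ℤ)
    (V : l ⊕ l → A) :
    ∑ j : l, wedge ((fun i => ∑ k, P⁻¹ i k • V k) (Sum.inl j))
        ((fun i => ∑ k, P⁻¹ i k • V k) (Sum.inr j)) =
      ∑ j : l, wedge ((fun i => ∑ k, Q⁻¹ i k • V k) (Sum.inl j))
        ((fun i => ∑ k, Q⁻¹ i k • V k) (Sum.inr j)) := by
  classical
  set e : l ⊕ l → ExteriorAlgebra ℤ A := fun k => ExteriorAlgebra.ι ℤ (V k) with he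
  set CP : (l ⊕ l) → (l ⊕ l) → ℤ :=
    fun k k' => ∑ j, P⁻¹ (Sum.inl j) k * P⁻¹ (Sum.inr j) k' with hCP
  set CQ : (l ⊕ l) → (l ⊕ l) → ℤ :=
    fun k k' => ∑ j, Q⁻¹ (Sum.inl j) k * Q⁻¹ (Sum.inr j) k' with hCQ
  have hsym : ∀ k k', CP k k' - CQ k k' = CP k' k - CQ k' k := by
    intro k k'
    have h1 := entry_eq P⁻¹ k k'
    have h2 := entry_eq Q⁻¹ k k'
    rw [symp_conj_inv S P hP hPS] at h1
    rw [symp_conj_inv S Q hQ hQS] at h2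
    simp only [hCP, hCQ]
    linarith
  apply Subtype.ext
  push_cast [wedge_coe]
  have hexp : ∀ (M : Matrix (l ⊕ l) (l ⊕ l) ℤ),
      ∑ j : l, ExteriorAlgebra.ι ℤ (∑ k, M (Sum.inl j) k • V k) *
          ExteriorAlgebra.ι ℤ (∑ k', M (Sum.inr j) k' • V k')
        = ∑ k, ∑ k', (∑ j : l, M (Sum.inl j) k * M (Sum.inr j) k') • (e k * e k') := by
    intro M
    rw [← ring_expand M e]
    exact Finset.sum_congr rfl fun j _ => by simp [he]
  rw [hexp P⁻¹, hexp Q⁻¹, ← sub_eq_zero, ← Finset.sum_sub_distrib]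
  have hsplit : ∀ k : l ⊕ l,
      ((∑ k', CP k k' • (e k * e k')) - ∑ k', CQ k k' • (e k * e k'))
        = ∑ k', (CP k k' - CQ k k') • (e k * e k') := by
    intro k
    rw [← Finset.sum_sub_distrib]
    exact Finset.sum_congr rfl fun k' _ => (sub_smul _ _ _).symm
  refine (Finset.sum_congr rfl fun k _ => hsplit k).trans ?_
  exact antisym_sum_zero (fun k k' => CP k k' - CQ k k') (fun k k' => e k * e k')
    hsym (fun k k' => ExteriorAlgebra.ι_add_mul_swap _ _)
    (fun k => ExteriorAlgebra.ι_sq_zero _)
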